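/- Combining the above: for any a ∈ ℝ^N_+ and any nonzero k, l, m in Λ = (ℤ/a_1)×⋯×(ℤ/a_N) with k+l=m, |k|,|l|,|m| ≤ M, and |k|+|l| ≠ |m|, one has 1/(|k|+|l|-|m|) ≤ C(1+M)^5 with C depending only on a and N. -/

import Mathlib

set_option maxHeartbeats 1000000

open Finset in
private lemma lagrange_aux {N : ℕ} (x y : Fin N → ℝ) :
    ∑ i, ∑ j, (x i * y j - x j * y i) ^ 2
      = 2 * ((∑ i, (x i) ^ 2) * (∑ i, (y i) ^ 2) - (∑ i, x i * y i) ^ 2) := by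
  have h : ∀ i j : Fin N, (x i * y j - x j * y i) ^ 2
      = (x i) ^ 2 * (y j) ^ 2 + (y i) ^ 2 * (x j) ^ 2 - 2 * ((x i * y i) * (x j * y j)) := by
    intro i j; ring
  simp only [h, Finset.sum_add_distrib, Finset.sum_sub_distrib, ← Finset.mul_sum,
    ← Finset.sum_mul]
  ring

private lemma case_obtuse (A M K L Mm P : ℝ) (hApos : 0 < A)
    (hKL2 : 1 ≤ A ^ 2 * (K * L)) (hP : P ≤ 0) (hM0 : 0 < M)
    (key : (K + L - Mm) * (K + L + Mm) = 2 * (K * L - P)) (hsum3 : K + L + Mm ≤ 3 * M)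
    (hpos : 0 < K + L - Mm) :
    1 ≤ (3 / 2 * A ^ 2 + 3 * A ^ 4) * (1 + M) ^ 5 * (K + L - Mm) := by
  have h15 : 1 + M ≤ (1 + M) ^ 5 := le_self_pow₀ (by linarith) (by norm_num)
  have e1 : (K + L - Mm) * (K + L + Mm) ≤ (K + L - Mm) * (3 * M) :=
    mul_le_mul_of_nonneg_left hsum3 hpos.le
  have s1 : 2 * (K * L) ≤ (K + L - Mm) * (3 * M) := by nlinarith [key, e1]
  have s2 : 2 ≤ A ^ 2 * ((K + L - Mm) * (3 * M)) := by
    nlinarith [mul_le_mul_of_nonneg_left s1 (sq_nonneg A)]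
  have s3 : (K + L - Mm) * (3 * M) ≤ (K + L - Mm) * (3 * (1 + M) ^ 5) := by
    apply mul_le_mul_of_nonneg_left _ hpos.le
    nlinarith [h15]
  have s4 := mul_le_mul_of_nonneg_left s3 (sq_nonneg A)
  nlinarith [s2, s4, mul_nonneg (mul_nonneg
    (by positivity : (0:ℝ) ≤ 3 * A ^ 4) (by positivity : (0:ℝ) ≤ (1 + M) ^ 5)) hpos.le]

private lemma case_acute (A M K L Mm P t : ℝ) (hApos : 0 < A) (hM0 : 0 < M)
    (u1 : 1 ≤ A ^ 4 * t ^ 2) (u2 : t ^ 2 ≤ 2 * (K ^ 2 * L ^ 2 - P ^ 2)) (hCS : P ≤ K * L)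
    (hkM : K ≤ M) (hlM : L ≤ M) (hKpos : 0 < K) (hLpos : 0 < L)
    (key : (K + L - Mm) * (K + L + Mm) = 2 * (K * L - P)) (hsum3 : K + L + Mm ≤ 3 * M)
    (hpos : 0 < K + L - Mm) :
    1 ≤ (3 / 2 * A ^ 2 + 3 * A ^ 4) * (1 + M) ^ 5 * (K + L - Mm) := by
  have e1 : (K + L - Mm) * (K + L + Mm) ≤ (K + L - Mm) * (3 * M) :=
    mul_le_mul_of_nonneg_left hsum3 hpos.le
  have u3 : K * L + P ≤ 2 * M ^ 2 := by
    nlinarith [hCS, mul_le_mul hkM hlM hLpos.le hM0.le]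
  have u4 : 1 ≤ 4 * A ^ 4 * M ^ 2 * (K * L - P) := by
    nlinarith [mul_le_mul_of_nonneg_left u2 (by positivity : (0:ℝ) ≤ A ^ 4),
      u1, mul_le_mul_of_nonneg_left u3
        (by nlinarith [hCS, pow_pos hApos 4] : (0:ℝ) ≤ 2 * A ^ 4 * (K * L - P))]
  have u5 : 2 * (K * L - P) ≤ (K + L - Mm) * (3 * M) := by nlinarith [key, e1]
  have u6 : 1 ≤ 6 * A ^ 4 * M ^ 3 * (K + L - Mm) := by
    nlinarith [mul_le_mul_of_nonneg_left u5
      (by positivity : (0:ℝ) ≤ 2 * A ^ 4 * M ^ 2), u4]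
  have u7 : 2 * M ^ 3 ≤ (1 + M) ^ 5 := by
    nlinarith [hM0, sq_nonneg M, mul_pos hM0 hM0, mul_pos (mul_pos hM0 hM0) hM0,
      pow_pos hM0 4, pow_pos hM0 5]
  nlinarith [u6, mul_le_mul_of_nonneg_left u7
      (by positivity : (0:ℝ) ≤ 3 * A ^ 4 * (K + L - Mm)),
    mul_nonneg (mul_nonneg (by positivity : (0:ℝ) ≤ 3 / 2 * A ^ 2)
      (by positivity : (0:ℝ) ≤ (1 + M) ^ 5)) hpos.le]

theorem stmt_12 (N : ℕ) (a : Fin N → ℝ) (ha : ∀ i, 0 < a i) :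
    ∃ C > 0, ∀ (M : ℝ) (k l m : EuclideanSpace ℝ (Fin N)),
      (∀ i, ∃ n : ℤ, k i = n / a i) → (∀ i, ∃ n : ℤ, l i = n / a i) →
      (∀ i, ∃ n : ℤ, m i = n / a i) →
      k ≠ 0 → l ≠ 0 → m ≠ 0 → k + l = m →
      ‖k‖ ≤ M → ‖l‖ ≤ M → ‖m‖ ≤ M → ‖k‖ + ‖l‖ ≠ ‖m‖ →
      0 < ‖k‖ + ‖l‖ - ‖m‖ ∧ 1 / (‖k‖ + ‖l‖ - ‖m‖) ≤ C * (1 + M) ^ 5 := by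
  classical
  set A : ℝ := 1 + ∑ i, a i with hAdef
  have hsum_nonneg : (0:ℝ) ≤ ∑ i, a i := Finset.sum_nonneg fun i _ => (ha i).le
  have hA1 : (1:ℝ) ≤ A := by simp only [hAdef]; linarith
  have hApos : (0:ℝ) < A := lt_of_lt_of_le one_pos hA1
  have haA : ∀ i, a i ≤ A := by
    intro i
    have : a i ≤ ∑ j, a j :=
      Finset.single_le_sum (fun j _ => (ha j).le) (Finset.mem_univ i)
    simp only [hAdef]; linarith
  refine ⟨3/2 * A^2 + 3 * A^4, by positivity, ?_⟩
  intro M k l m hk hl hm hk0 hl0 hm0 hklm hkM hlM hmM hne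
  -- coordinate bound
  have coordb : ∀ x : EuclideanSpace ℝ (Fin N), ∀ i, |x i| ≤ ‖x‖ := by
    intro x i
    rw [EuclideanSpace.norm_eq, ← Real.sqrt_sq_eq_abs]
    apply Real.sqrt_le_sqrt
    have : (x i)^2 = ‖x i‖^2 := by rw [Real.norm_eq_abs, sq_abs]
    rw [this]
    exact Finset.single_le_sum (f := fun j => ‖x j‖^2)
      (fun j _ => sq_nonneg _) (Finset.mem_univ i)
  -- lower bound for nonzero lattice vectors
  have lb : ∀ x : EuclideanSpace ℝ (Fin N), (∀ i, ∃ n : ℤ, x i = n / a i) → x ≠ 0 →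
      1 ≤ A * ‖x‖ := by
    intro x hx hx0
    have : ∃ i, x i ≠ 0 := by
      by_contra hcon
      push_neg at hcon
      exact hx0 (PiLp.ext fun i => hcon i)
    obtain ⟨i, hi⟩ := this
    obtain ⟨n, hn⟩ := hx i
    have hn0 : n ≠ 0 := by
      rintro rfl; simp at hn; exact hi hn
    have h1n : (1:ℝ) ≤ |(n:ℝ)| := by
      rw [← Int.cast_abs]; exact_mod_cast Int.one_le_abs hn0
    have h2 : 1/A ≤ |x i| := by
      rw [hn, abs_div, abs_of_pos (ha i)]
      exact div_le_div₀ (abs_nonneg _) h1n (ha i) (haA i)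
    have h3 := h2.trans (coordb x i)
    rw [div_le_iff₀ hApos] at h3
    linarith [h3]
  have hKc := lb k hk hk0
  have hLc := lb l hl hl0
  have hKpos : 0 < ‖k‖ := norm_pos_iff.mpr hk0
  have hLpos : 0 < ‖l‖ := norm_pos_iff.mpr hl0
  have hM0 : 0 < M := lt_of_lt_of_le hKpos hkM
  have htri : ‖m‖ ≤ ‖k‖ + ‖l‖ := by rw [← hklm]; exact norm_add_le k l
  have hlt : ‖m‖ < ‖k‖ + ‖l‖ := lt_of_le_of_ne htri fun h => hne h.symm
  have hpos : 0 < ‖k‖ + ‖l‖ - ‖m‖ := by linarith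
  refine ⟨hpos, ?_⟩
  have hPsum : (inner ℝ k l : ℝ) = ∑ i, k i * l i := by
    simp [PiLp.inner_apply, mul_comm]
  have hK2 : ∑ i, (k i)^2 = ‖k‖^2 := by
    rw [EuclideanSpace.norm_sq_eq]
    simp only [Real.norm_eq_abs, sq_abs]
  have hL2 : ∑ i, (l i)^2 = ‖l‖^2 := by
    rw [EuclideanSpace.norm_sq_eq]
    simp only [Real.norm_eq_abs, sq_abs]
  have hLag : ∑ i, ∑ j, (k i * l j - k j * l i) ^ 2
      = 2 * (‖k‖^2 * ‖l‖^2 - (inner ℝ k l : ℝ)^2) := by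
    rw [lagrange_aux, hK2, hL2, hPsum]
  have hCS : (inner ℝ k l : ℝ) ≤ ‖k‖ * ‖l‖ := real_inner_le_norm k l
  have hm2 : ‖m‖^2 = ‖k‖^2 + ‖l‖^2 + 2 * (inner ℝ k l : ℝ) := by
    rw [← hklm, @norm_add_sq_real]; ring
  have key : (‖k‖ + ‖l‖ - ‖m‖) * (‖k‖ + ‖l‖ + ‖m‖)
      = 2 * (‖k‖ * ‖l‖ - (inner ℝ k l : ℝ)) := by nlinarith [hm2]
  have hsum3 : ‖k‖ + ‖l‖ + ‖m‖ ≤ 3 * M := by linarith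
  rw [div_le_iff₀ hpos]
  rcases le_or_gt (inner ℝ k l : ℝ) 0 with hP | hP
  · -- obtuse case
    have hKL2 : 1 ≤ A^2 * (‖k‖ * ‖l‖) := by nlinarith [hKc, hLc, hApos, hKpos, hLpos]
    exact case_obtuse A M ‖k‖ ‖l‖ ‖m‖ _ hApos hKL2 hP hM0 key hsum3 hpos
  · -- acute case: find nonzero cross term
    have hcross : ∃ i j, k i * l j - k j * l i ≠ 0 := by
      by_contra hcon
      push_neg at hcon
      have hz : ∑ i, ∑ j, (k i * l j - k j * l i) ^ 2 = 0 :=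
        Finset.sum_eq_zero fun i _ => Finset.sum_eq_zero fun j _ => by
          rw [hcon i j]; ring
      rw [hz] at hLag
      have hPeq : (inner ℝ k l : ℝ) = ‖k‖ * ‖l‖ := by nlinarith [hCS, hP, hLag]
      have hsmul : ‖l‖ • k = ‖k‖ • l := inner_eq_norm_mul_iff_real.mp hPeq
      have h2 : ‖k‖ • m = (‖k‖ + ‖l‖) • k := by
        rw [← hklm, smul_add, ← hsmul, ← add_smul]
      have h3 := congrArg norm h2
      rw [norm_smul, norm_smul, Real.norm_eq_abs, abs_of_nonneg (norm_nonneg k),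
        Real.norm_eq_abs, abs_of_nonneg (by positivity : (0:ℝ) ≤ ‖k‖ + ‖l‖)] at h3
      have : ‖k‖ + ‖l‖ = ‖m‖ := by nlinarith [h3, hKpos]
      exact hne this
    obtain ⟨i, j, hij⟩ := hcross
    set t : ℝ := k i * l j - k j * l i with htdef
    obtain ⟨nk, hnk⟩ := hk i
    obtain ⟨nk2, hnk2⟩ := hk j
    obtain ⟨nl, hnl⟩ := hl j
    obtain ⟨nl2, hnl2⟩ := hl i
    have ht : t = ((nk * nl - nk2 * nl2 : ℤ) : ℝ) / (a i * a j) := by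
      rw [htdef, hnk, hnk2, hnl, hnl2]
      push_cast
      field_simp
    set q : ℤ := nk * nl - nk2 * nl2 with hq
    have hq0 : q ≠ 0 := by
      rintro h
      rw [ht, h] at hij
      simp at hij
    have hq1 : (1:ℝ) ≤ |(q:ℝ)| := by
      rw [← Int.cast_abs]; exact_mod_cast Int.one_le_abs hq0
    have haij : 0 < a i * a j := mul_pos (ha i) (ha j)
    have habs : (a i * a j) * |t| = |(q:ℝ)| := by
      rw [ht, abs_div, abs_of_pos haij]
      field_simp
      exact div_self haij.ne'
    have hA2 : a i * a j ≤ A^2 := by nlinarith [haA i, haA j, ha i, ha j, hApos]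
    have u0 : 1 ≤ A^2 * |t| := by
      nlinarith [habs, hq1, hA2, abs_nonneg t, haij]
    have u1 : 1 ≤ A^4 * t^2 := by
      calc (1:ℝ) = 1 * 1 := by ring
        _ ≤ (A^2 * |t|) * (A^2 * |t|) :=
            mul_le_mul u0 u0 zero_le_one (by positivity)
        _ = A^4 * (|t| * |t|) := by ring
        _ = A^4 * t^2 := by rw [abs_mul_abs_self]; ring
    have u2 : t^2 ≤ 2 * (‖k‖^2 * ‖l‖^2 - (inner ℝ k l : ℝ)^2) := by
      rw [← hLag, htdef]
      calc (k i * l j - k j * l i)^2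
          ≤ ∑ j', (k i * l j' - k j' * l i)^2 :=
            Finset.single_le_sum (f := fun j' => (k i * l j' - k j' * l i)^2)
              (fun _ _ => sq_nonneg _) (Finset.mem_univ j)
        _ ≤ ∑ i', ∑ j', (k i' * l j' - k j' * l i')^2 :=
            Finset.single_le_sum (f := fun i' => ∑ j', (k i' * l j' - k j' * l i')^2)
              (fun _ _ => Finset.sum_nonneg fun _ _ => sq_nonneg _) (Finset.mem_univ i)
    exact case_acute A M ‖k‖ ‖l‖ ‖m‖ _ _ hApos hM0 u1 u2 hCS hkM hlM hKpos hLpos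
      key hsum3 hpos
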